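/- Let t be the Tribonacci word. For every integer k ≥ 1 and every position i ≥ 0, the suffix of t starting at position i begins in infinitely many abelian k-powers; that is, for every N there is an abelian k-power of length greater than N occurring as a prefix of that suffix. -/

import Mathlib

/-- The factor of the infinite word `ω` of length `n` starting at position `i`. -/
def factor {A : Type*} (ω : ℕ → A) (i n : ℕ) : List A :=
  (List.range n).map fun j => ω (i + j)

/-- The word `ω` has an abelian `k`-power with abelian period `ℓ > 0` starting at
position `i`. -/
def AbelianPowerAt {A : Type*} [DecidableEq A] (ω : ℕ → A) (i k ℓ : ℕ) : Prop :=
  0 < ℓ ∧ ∀ j₁ j₂ : ℕ, j₁ < k → j₂ < k → ∀ a : A,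
    (factor ω (i + j₁ * ℓ) ℓ).count a = (factor ω (i + j₂ * ℓ) ℓ).count a

/-- The Tribonacci morphism `τ(0) = 01`, `τ(1) = 02`, `τ(2) = 0`. -/
def tau : Fin 3 → List (Fin 3) := fun a =>
  if a = 0 then [0, 1] else if a = 1 then [0, 2] else [0]

/-- The iterates `τ^k(0)`, which are the prefixes of the Tribonacci word. -/
def tribPrefix : ℕ → List (Fin 3)
  | 0 => [0]
  | k + 1 => ((tribPrefix k).map tau).flatten

namespace TB

abbrev W := List (Fin 3)

def sig (w : W) : W := (w.map tau).flatten

lemma trib_succ (m : ℕ) : tribPrefix (m+1) = sig (tribPrefix m) := rfl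

lemma sig_append (a b : W) : sig (a ++ b) = sig a ++ sig b := by simp [sig]

lemma sig_cons (a : Fin 3) (w : W) : sig (a :: w) = tau a ++ sig w := by simp [sig]

lemma sig_prefix {a b : W} (h : a <+: b) : sig a <+: sig b := by
  obtain ⟨r, rfl⟩ := h
  exact ⟨sig r, (sig_append a r).symm⟩

lemma trib_rec (m : ℕ) :
    tribPrefix (m+3) = tribPrefix (m+2) ++ tribPrefix (m+1) ++ tribPrefix m := by
  induction m with
  | zero => decide
  | succ n ih =>
      calc tribPrefix (n+1+3) = sig (tribPrefix (n+3)) := rfl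
        _ = sig (tribPrefix (n+2)) ++ sig (tribPrefix (n+1)) ++ sig (tribPrefix n) := by
              rw [ih, sig_append, sig_append]
        _ = tribPrefix (n+1+2) ++ tribPrefix (n+1+1) ++ tribPrefix (n+1) := rfl

lemma trib_prefix_succ (m : ℕ) : tribPrefix m <+: tribPrefix (m+1) := by
  induction m with
  | zero => decide
  | succ n ih => exact sig_prefix ih

lemma trib_prefix_mono {a b : ℕ} (h : a ≤ b) : tribPrefix a <+: tribPrefix b := by
  induction b with
  | zero => simp [Nat.le_zero.mp h]
  | succ n ih =>
      rcases Nat.lt_or_ge a (n+1) with h' | h'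
      · exact (ih (Nat.lt_succ_iff.mp h')).trans (trib_prefix_succ n)
      · have : a = n+1 := le_antisymm h h'
        simp [this]


lemma trib_head (m : ℕ) : ∃ r, tribPrefix m = 0 :: r := by
  induction m with
  | zero => exact ⟨[], rfl⟩
  | succ n ih =>
      obtain ⟨r, hr⟩ := ih
      refine ⟨1 :: sig r, ?_⟩
      rw [trib_succ, hr, sig_cons]
      rfl

lemma len_sig_ge (w : W) : w.length ≤ (sig w).length := by
  induction w with
  | nil => simp [sig]
  | cons a u ih =>
      rw [sig_cons]
      have : 1 ≤ (tau a).length := by fin_cases a <;> decide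
      simp only [List.length_append, List.length_cons]
      omega

lemma trib_len_lt (m : ℕ) : (tribPrefix m).length < (tribPrefix (m+1)).length := by
  obtain ⟨r, hr⟩ := trib_head m
  have h2 : (tribPrefix (m+1)) = [0, 1] ++ sig r := by
    rw [trib_succ, hr, sig_cons]; rfl
  have := len_sig_ge r
  rw [hr, h2]
  simp only [List.length_append, List.length_cons]
  omega

def GP (w : W) : Prop := ∃ M, w <+: tribPrefix M

lemma GP_nil : GP [] := ⟨0, List.nil_prefix⟩

lemma GP_sig {w : W} (h : GP w) : GP (sig w) := by
  obtain ⟨M, hM⟩ := h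
  exact ⟨M+1, sig_prefix hM⟩

lemma tau_head (a : Fin 3) : ∃ r, tau a = 0 :: r := by
  fin_cases a <;> exact ⟨_, rfl⟩

/-- after the sigma-image of a good prefix, the next letter of the Tribonacci word is 0. -/
lemma GP_sig_zero {w : W} (h : GP w) : GP (sig w ++ [0]) := by
  obtain ⟨M, hM⟩ := h
  have h1 : w <+: tribPrefix (M+1) := hM.trans (trib_prefix_succ M)
  have hlen : w.length < (tribPrefix (M+1)).length :=
    lt_of_le_of_lt hM.length_le (trib_len_lt M)
  obtain ⟨r, hr⟩ := h1
  rcases r with _ | ⟨a, r'⟩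
  · exfalso
    rw [← hr] at hlen
    simp at hlen
  · refine ⟨M+2, ?_⟩
    have : tribPrefix (M+2) = sig w ++ (tau a ++ sig r') := by
      rw [trib_succ (M+1), ← hr, sig_append, sig_cons]
    obtain ⟨ra, hra⟩ := tau_head a
    rw [this, hra]
    exact ⟨ra ++ sig r', by simp⟩

def Phi (L : List ℕ) : W := (L.map tribPrefix).flatten

lemma Phi_nil : Phi [] = [] := rfl

lemma Phi_cons (b : ℕ) (L : List ℕ) : Phi (b :: L) = tribPrefix b ++ Phi L := by
  simp [Phi]

lemma Phi_append (L₁ L₂ : List ℕ) : Phi (L₁ ++ L₂) = Phi L₁ ++ Phi L₂ := by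
  simp [Phi]

lemma sig_flatten (l : List W) : sig l.flatten = (l.map sig).flatten := by
  induction l with
  | nil => rfl
  | cons a u ih => simp [sig_append, ih]

lemma Phi_sig (L : List ℕ) (h : ∀ b ∈ L, 1 ≤ b) :
    Phi L = sig (Phi (L.map (· - 1))) := by
  rw [Phi, Phi, sig_flatten, List.map_map, List.map_map]
  congr 1
  apply List.map_congr_left
  intro b hb
  have hb1 := h b hb
  have : b - 1 + 1 = b := Nat.succ_pred_eq_of_pos hb1
  simp only [Function.comp_apply]
  rw [← trib_succ, this]

lemma sum_map_pred (s : List ℕ) (h : ∀ b ∈ s, 1 ≤ b) :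
    (s.map (· - 1)).sum + s.length = s.sum := by
  induction s with
  | nil => simp
  | cons a u ihu =>
      have ha := h a (by simp)
      have := ihu (fun b hb => h b (by simp [hb]))
      simp only [List.map_cons, List.sum_cons, List.length_cons]
      omega

lemma sum_map_pred_le (s : List ℕ) : (s.map (· - 1)).sum ≤ s.sum := by
  induction s with
  | nil => simp
  | cons a u ihu => simp only [List.map_cons, List.sum_cons]; omega

lemma pref_main : ∀ n (L : List ℕ), L.sum + L.length ≤ n →
    L.Pairwise (· > ·) → GP (Phi L) := by
  intro n
  induction n with
  | zero =>
      intro L hL _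
      have : L = [] := by
        cases L with
        | nil => rfl
        | cons a u => simp at hL
      simp [this, Phi_nil, GP_nil]
  | succ n ih =>
      intro L hL hp
      rcases L.eq_nil_or_concat with rfl | ⟨s, c, rfl⟩
      · simp [Phi_nil, GP_nil]
      simp only [List.concat_eq_append] at hp hL ⊢
      have hps : s.Pairwise (· > ·) := (List.pairwise_append.mp hp).1
      have hgt : ∀ x ∈ s, x > c := by
        intro x hx
        exact (List.pairwise_append.mp hp).2.2 x hx c (by simp)
      have hLsum : s.sum + c + (s.length + 1) ≤ n + 1 := by
        simpa [List.sum_append, List.length_append] using hL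
      rcases Nat.eq_zero_or_pos c with rfl | hc
      · -- last element is 0
        have hs1 : ∀ b ∈ s, 1 ≤ b := fun b hb => hgt b hb
        have hmap : (s.map (· - 1)).Pairwise (· > ·) := by
          refine List.pairwise_map.mpr (hps.imp_of_mem ?_)
          intro a b ha hb hab
          have := hs1 b hb
          omega
        have hmeas : (s.map (· - 1)).sum + (s.map (· - 1)).length ≤ n := by
          have h1 := sum_map_pred_le s
          have h2 : (s.map (· - 1)).length = s.length := by simp
          omega
        have hGP := ih _ hmeas hmap
        have hPhi : Phi (s ++ [0]) = sig (Phi (s.map (· - 1))) ++ [0] := by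
          rw [Phi_append, ← Phi_sig s hs1]
          rfl
        rw [hPhi]
        exact GP_sig_zero hGP
      · -- all elements ≥ 1
        have hall : ∀ b ∈ s ++ [c], 1 ≤ b := by
          intro b hb
          rcases List.mem_append.mp hb with h | h
          · have := hgt b h; omega
          · simp at h; omega
        have hmap : ((s ++ [c]).map (· - 1)).Pairwise (· > ·) := by
          refine List.pairwise_map.mpr (hp.imp_of_mem ?_)
          intro a b ha hb hab
          have := hall b hb
          omega
        have hmeas : ((s ++ [c]).map (· - 1)).sum + ((s ++ [c]).map (· - 1)).length ≤ n := by
          have h1 := sum_map_pred (s ++ [c]) hall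
          have h2 : ((s ++ [c]).map (· - 1)).length = (s ++ [c]).length := by simp
          have h3 : (s ++ [c]).sum + (s ++ [c]).length ≤ n + 1 := hL
          have h4 : 1 ≤ (s ++ [c]).length := by simp
          omega
        have hGP := ih _ hmeas hmap
        rw [Phi_sig _ hall]
        exact GP_sig hGP

lemma pref (L : List ℕ) (hp : L.Pairwise (· > ·)) : GP (Phi L) :=
  pref_main (L.sum + L.length) L le_rfl hp

end TB

namespace NB

def StepR (A B : Multiset ℤ) : Prop :=
  ∃ p S, A = p ::ₘ p ::ₘ S ∧ B = (p+1) ::ₘ (p-3) ::ₘ S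

lemma StepR.card_eq {A B : Multiset ℤ} (h : StepR A B) : B.card = A.card := by
  obtain ⟨p, S, rfl, rfl⟩ := h
  simp

-- the real root
lemma exists_beta : ∃ β : ℝ, 1.5 ≤ β ∧ β ≤ 2 ∧ β^3 = β^2 + β + 1 := by
  have hcont : ContinuousOn (fun x : ℝ => x^3 - x^2 - x - 1) (Set.Icc 1.5 2) := by
    fun_prop
  have h0 : (0:ℝ) ∈ Set.Icc ((1.5:ℝ)^3 - 1.5^2 - 1.5 - 1) (2^3 - 2^2 - 2 - 1) := by
    norm_num
  have := intermediate_value_Icc (by norm_num : (1.5:ℝ) ≤ 2) hcont h0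
  obtain ⟨β, hβ, hroot⟩ := this
  simp only [] at hroot
  exact ⟨β, hβ.1, hβ.2, by linarith [hroot]⟩

section Beta

variable (β : ℝ) (hβ1 : 1.5 ≤ β) (hβroot : β^3 = β^2 + β + 1)

include hβ1 hβroot in
lemma beta_key (p : ℤ) : β^(p+1) + β^(p-3) = 2 * β^p := by
  have hβ0 : β ≠ 0 := by linarith
  have h4 : β^(4:ℕ) + 1 = 2 * β^(3:ℕ) := by ring_nf; nlinarith [hβroot]
  have e1 : β^(p+1) = β^(p-3) * β^(4:ℕ) := by
    rw [← zpow_natCast β 4, ← zpow_add₀ hβ0]; ring_nf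
  have e2 : β^p = β^(p-3) * β^(3:ℕ) := by
    rw [← zpow_natCast β 3, ← zpow_add₀ hβ0]; ring_nf
  rw [e1, e2]
  nlinarith [h4, zpow_pos (by linarith : (0:ℝ) < β) (p-3)]

noncomputable def V (S : Multiset ℤ) : ℝ := (S.map (fun z => β ^ z)).sum

include hβ1 hβroot in
lemma V_step {A B : Multiset ℤ} (h : StepR A B) : V β B = V β A := by
  obtain ⟨p, S, rfl, rfl⟩ := h
  simp only [V, Multiset.map_cons, Multiset.sum_cons]
  have := beta_key β hβ1 hβroot p
  linarith

include hβ1 in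
lemma V_mem_le {S : Multiset ℤ} {x : ℤ} (hx : x ∈ S) : β ^ x ≤ V β S := by
  have h0 : (0:ℝ) < β := by linarith
  have : β ^ x ∈ S.map (fun z => β ^ z) := Multiset.mem_map_of_mem _ hx
  exact Multiset.single_le_sum (fun y hy => by
    obtain ⟨z, _, rfl⟩ := Multiset.mem_map.mp hy
    exact le_of_lt (zpow_pos h0 z)) _ this

omit hβ1 hβroot in
lemma V_lt_of_all_lt {S : Multiset ℤ} {c : ℝ}
    (h : ∀ x ∈ S, β ^ x ≤ c) : V β S ≤ S.card * c := by
  have : ∀ y ∈ S.map (fun z => β ^ z), y ≤ c := by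
    intro y hy
    obtain ⟨z, hz, rfl⟩ := Multiset.mem_map.mp hy
    exact h z hz
  calc V β S ≤ (S.map (fun z => β ^ z)).card • c := Multiset.sum_le_card_nsmul _ _ this
    _ = S.card * c := by simp [nsmul_eq_mul]

end Beta

theorem no_infinite_run : ∀ n (f : ℕ → Multiset ℤ),
    (∀ t, StepR (f t) (f (t+1))) → (f 0).card = n → False := by
  intro n
  induction n using Nat.strong_induction_on with
  | _ n ih =>
  intro f hf hcard
  -- card constant
  have hcards : ∀ t, (f t).card = n := by
    intro t
    induction t with
    | zero => exact hcard
    | succ u ihu => rw [(hf u).card_eq, ihu]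
  -- β setup
  obtain ⟨β, hβ1, hβ2, hβroot⟩ := exists_beta
  have hβ0 : (0:ℝ) < β := by linarith
  have hβgt1 : (1:ℝ) < β := by linarith
  -- V constant
  have hVconst : ∀ t, V β (f t) = V β (f 0) := by
    intro t
    induction t with
    | zero => rfl
    | succ u ihu => rw [V_step β hβ1 hβroot (hf u), ihu]
  -- upper bound on members
  obtain ⟨Bn, hBn⟩ : ∃ Bn : ℕ, V β (f 0) < β ^ (Bn:ℤ) := by
    obtain ⟨m, hm⟩ := pow_unbounded_of_one_lt (V β (f 0)) hβgt1
    exact ⟨m, by rwa [zpow_natCast]⟩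
  have hmem_lt : ∀ t x, x ∈ f t → x < (Bn:ℤ) := by
    intro t x hx
    by_contra hge
    push_neg at hge
    have h1 : β ^ ((Bn:ℤ)) ≤ β ^ x := by
      apply zpow_le_zpow_right₀ (le_of_lt hβgt1) hge
    have h2 := V_mem_le β hβ1 hx
    rw [hVconst t] at h2
    linarith
  -- move positions
  have hmove : ∀ t, ∃ p S, f t = p ::ₘ p ::ₘ S ∧ f (t+1) = (p+1) ::ₘ (p-3) ::ₘ S := hf
  let P : ℕ → ℤ := fun t => (hmove t).choose
  let SS : ℕ → Multiset ℤ := fun t => (hmove t).choose_spec.choose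
  have hPS : ∀ t, f t = P t ::ₘ P t ::ₘ SS t ∧ f (t+1) = (P t + 1) ::ₘ (P t - 3) ::ₘ SS t :=
    fun t => (hmove t).choose_spec.choose_spec
  have hPmem : ∀ t, P t ∈ f t := by
    intro t
    rw [(hPS t).1]
    simp
  have hPlt : ∀ t, P t < (Bn:ℤ) := fun t => hmem_lt t _ (hPmem t)
  -- n ≥ 2
  have hn2 : 2 ≤ n := by
    have h0 := hcards 0
    rw [(hPS 0).1] at h0
    simp at h0
    omega
  by_cases hinf : ∃ x : ℤ, {t | P t = x}.Infinite
  · -- Case 1: some position is moved infinitely often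
    have hbddE : ∀ x : ℤ, x ∈ {x : ℤ | {t | P t = x}.Infinite} → x ≤ (Bn:ℤ) := by
      intro x hx
      obtain ⟨t, ht⟩ := hx.nonempty
      have := hPlt t
      simp only [Set.mem_setOf_eq] at ht
      omega
    obtain ⟨X, hXmem, hXmax⟩ :=
      Int.exists_greatest_of_bdd ⟨(Bn:ℤ), hbddE⟩ hinf
    -- after some time, all moves are at positions ≤ X
    have hfin : {t | X < P t}.Finite := by
      have hsub : {t | X < P t} ⊆ ⋃ x ∈ Finset.Icc (X+1) (Bn:ℤ), {t | P t = x} := by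
        intro t ht
        simp only [Set.mem_setOf_eq] at ht
        have := hPlt t
        simp only [Set.mem_iUnion]
        exact ⟨P t, by simp [Finset.mem_Icc]; omega, rfl⟩
      refine Set.Finite.subset (Set.Finite.biUnion (Finset.Icc (X+1) (Bn:ℤ)).finite_toSet ?_) hsub
      intro x hx
      simp only [Finset.coe_Icc, Set.mem_Icc] at hx
      by_contra hinf'
      have := hXmax x hinf'
      omega
    obtain ⟨T₁, hT₁⟩ : ∃ T₁, ∀ t, T₁ ≤ t → P t ≤ X := by
      rcases hfin.bddAbove with ⟨ub, hub⟩
      refine ⟨ub + 1, fun t ht => ?_⟩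
      by_contra hgt
      push_neg at hgt
      have := hub (show t ∈ {t | X < P t} from hgt)
      omega
    set cnt : ℕ → ℕ := fun t => Multiset.count (X+1) (f t) with hcntdef
    have hcnt : ∀ t, T₁ ≤ t → cnt (t+1) = cnt t + (if P t = X then 1 else 0) := by
      intro t ht
      have hple := hT₁ t ht
      obtain ⟨h1, h2⟩ := hPS t
      simp only [hcntdef, h1, h2, Multiset.count_cons]
      split_ifs <;> omega
    have hmono : ∀ t₁ t₂, T₁ ≤ t₁ → t₁ ≤ t₂ → cnt t₁ ≤ cnt t₂ := by
      intro t₁ t₂ h1 h2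
      induction t₂, h2 using Nat.le_induction with
      | base => exact le_rfl
      | succ u hu ihu =>
          have := hcnt u (le_trans h1 hu)
          split at this <;> omega
    have hgrow : ∀ s : ℕ, ∃ t, T₁ ≤ t ∧ s ≤ cnt t := by
      intro s
      induction s with
      | zero => exact ⟨T₁, le_rfl, Nat.zero_le _⟩
      | succ s ihs =>
          obtain ⟨t, ht1, hts⟩ := ihs
          obtain ⟨u, hu, htu⟩ := hXmem.exists_gt t
          simp only [Set.mem_setOf_eq] at hu
          have hT₁u : T₁ ≤ u := by omega
          have h1 := hcnt u hT₁u
          rw [hu] at h1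
          simp at h1
          have h2 : cnt t ≤ cnt u := hmono t u ht1 (by omega)
          exact ⟨u + 1, by omega, by omega⟩
    obtain ⟨t, _, hcnt_big⟩ := hgrow (n+1)
    have : cnt t ≤ n := by
      rw [← hcards t]
      exact Multiset.count_le_card _ _
    omega
  · -- Case 2: every position is moved finitely often
    push_neg at hinf
    try simp only [Set.not_infinite] at hinf
    have hbelow : ∀ x : ℤ, ∃ T, ∀ t, T ≤ t → P t < x := by
      intro x
      have hfin : {t | x ≤ P t}.Finite := by
        have hsub : {t | x ≤ P t} ⊆ ⋃ y ∈ Finset.Icc x (Bn:ℤ), {t | P t = y} := by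
          intro t ht
          simp only [Set.mem_setOf_eq] at ht
          have := hPlt t
          simp only [Set.mem_iUnion]
          exact ⟨P t, by simp [Finset.mem_Icc]; omega, rfl⟩
        exact Set.Finite.subset
          (Set.Finite.biUnion (Finset.Icc x (Bn:ℤ)).finite_toSet (fun y _ => hinf y)) hsub
      rcases hfin.bddAbove with ⟨ub, hub⟩
      refine ⟨ub + 1, fun t ht => ?_⟩
      by_contra hge
      push_neg at hge
      have := hub (show t ∈ {t | x ≤ P t} from hge)
      omega
    -- V positive
    have hV0pos : 0 < V β (f 0) := by
      have := V_mem_le β hβ1 (hPmem 0)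
      rw [hVconst 0] at this
      have := zpow_pos hβ0 (P 0)
      linarith
    -- there is always a member above xs
    obtain ⟨M, hM⟩ : ∃ M : ℕ, (n:ℝ) < V β (f 0) * β ^ (M:ℤ) := by
      obtain ⟨m, hm⟩ := pow_unbounded_of_one_lt ((n:ℝ) / V β (f 0)) hβgt1
      refine ⟨m, ?_⟩
      rw [div_lt_iff₀ hV0pos] at hm
      rw [zpow_natCast]
      nlinarith [hm]
    set xs : ℤ := -(M:ℤ) with hxsdef
    have hhigh : ∀ t, ∃ x ∈ f t, xs ≤ x := by
      intro t
      by_contra hnone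
      push_neg at hnone
      have hall : ∀ x ∈ f t, β ^ x ≤ β ^ (xs - 1) := by
        intro x hx
        exact zpow_le_zpow_right₀ (le_of_lt hβgt1) (by have := hnone x hx; omega)
      have h1 : V β (f t) ≤ (f t).card * β ^ (xs - 1) := V_lt_of_all_lt β hall
      rw [hVconst t, hcards t] at h1
      have h2 : β ^ (xs - 1) < β ^ xs := by
        apply zpow_lt_zpow_right₀ hβgt1
        omega
      have h3 : β ^ xs * V β (f 0) * β ^ (M:ℤ) ≤ V β (f 0) := by
        have : β ^ xs * β ^ (M:ℤ) = 1 := by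
          rw [← zpow_add₀ (ne_of_gt hβ0)]
          simp [hxsdef]
        nlinarith [this, hV0pos]
      have hn0 : (0:ℝ) < n := by
        have : (2:ℝ) ≤ n := by exact_mod_cast hn2
        linarith
      have hxspos : (0:ℝ) < β ^ xs := zpow_pos hβ0 xs
      nlinarith [hM, h1, h2, h3]
    obtain ⟨Ts, hTs⟩ := hbelow (xs - 4)
    -- high part frozen
    have hfreeze : ∀ t, Ts ≤ t →
        (f (t+1)).filter (fun z => xs - 3 ≤ z) = (f t).filter (fun z => xs - 3 ≤ z) := by
      intro t ht
      obtain ⟨h1, h2⟩ := hPS t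
      have hp := hTs t ht
      rw [h1, h2]
      rw [Multiset.filter_cons_of_neg _ (by omega : ¬ (xs - 3 ≤ P t + 1)),
          Multiset.filter_cons_of_neg _ (by omega : ¬ (xs - 3 ≤ P t - 3)),
          Multiset.filter_cons_of_neg _ (by omega : ¬ (xs - 3 ≤ P t)),
          Multiset.filter_cons_of_neg _ (by omega : ¬ (xs - 3 ≤ P t))]
    -- low part runs forever
    set g : ℕ → Multiset ℤ := fun u => (f (Ts + u)).filter (fun z => z < xs - 3) with hgdef
    have e1 : ∀ (a : ℤ) (s : Multiset ℤ), a < xs - 3 →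
        Multiset.filter (fun z => z < xs - 3) (a ::ₘ s)
          = a ::ₘ Multiset.filter (fun z => z < xs - 3) s := by
      intro a s h
      exact Multiset.filter_cons_of_pos _ h
    have hg : ∀ u, StepR (g u) (g (u+1)) := by
      intro u
      obtain ⟨h1, h2⟩ := hPS (Ts + u)
      have hp := hTs (Ts + u) (by omega)
      refine ⟨P (Ts + u), (SS (Ts + u)).filter (fun z => z < xs - 3), ?_, ?_⟩
      · rw [hgdef]
        simp only []
        rw [h1]
        rw [e1 _ _ (by omega), e1 _ _ (by omega)]
      · rw [hgdef]
        simp only []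
        have : Ts + (u + 1) = (Ts + u) + 1 := by omega
        rw [this, h2]
        rw [e1 _ _ (by omega), e1 _ _ (by omega)]
    have hcardlow : (g 0).card < n := by
      have hsplit : ((f Ts).filter (fun z => xs - 3 ≤ z)).card
          + ((f Ts).filter (fun z => z < xs - 3)).card = n := by
        have hcongr : (f Ts).filter (fun z => z < xs - 3)
            = (f Ts).filter (fun z => ¬ (xs - 3 ≤ z)) := by
          apply Multiset.filter_congr
          intro x _
          constructor <;> (intro; omega)
        rw [hcongr, ← Multiset.card_add, Multiset.filter_add_not]
        exact hcards Ts
      have hpos : 0 < ((f Ts).filter (fun z => xs - 3 ≤ z)).card := by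
        obtain ⟨x, hx, hxs⟩ := hhigh Ts
        exact Multiset.card_pos_iff_exists_mem.mpr ⟨x, Multiset.mem_filter.mpr ⟨hx, by omega⟩⟩
      rw [hgdef]
      simp only []
      rw [Nat.add_zero]
      omega
    exact ih _ hcardlow g hg rfl

theorem step_acc (A : Multiset ℤ) : Acc (fun B A => StepR A B) A := by
  by_contra hA
  -- build an infinite run
  have key : ∀ (S : Multiset ℤ), ¬ Acc (fun B A => StepR A B) S →
      ∃ S', StepR S S' ∧ ¬ Acc (fun B A => StepR A B) S' := by
    intro S hS
    by_contra hno
    push_neg at hno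
    exact hS (Acc.intro S (fun y hy => hno y hy))
  let F : {S : Multiset ℤ // ¬ Acc (fun B A => StepR A B) S} →
      {S : Multiset ℤ // ¬ Acc (fun B A => StepR A B) S} := fun S =>
    ⟨(key S.1 S.2).choose, (key S.1 S.2).choose_spec.2⟩
  have hF : ∀ S, StepR S.1 (F S).1 := fun S => (key S.1 S.2).choose_spec.1
  let f : ℕ → {S : Multiset ℤ // ¬ Acc (fun B A => StepR A B) S} := fun n => F^[n] ⟨A, hA⟩
  have hf : ∀ t, StepR (f t).1 (f (t+1)).1 := by
    intro t
    have : f (t+1) = F (f t) := Function.iterate_succ_apply' F t _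
    rw [this]
    exact hF (f t)
  exact no_infinite_run ((f 0).1.card) (fun t => (f t).1) hf rfl

/-- chains of steps with explicit length -/
inductive ChainN : ℕ → Multiset ℤ → Multiset ℤ → Prop
  | refl (S : Multiset ℤ) : ChainN 0 S S
  | cons {L : ℕ} {S T U : Multiset ℤ} : StepR S T → ChainN L T U → ChainN (L+1) S U

theorem exists_nf (A : Multiset ℤ) : ∃ L B, ChainN L A B ∧ ∀ x, B.count x ≤ 1 := by
  induction A using (fun h => @WellFounded.induction _ _ h) (⟨step_acc⟩ :
      WellFounded (fun B A => StepR A B)) with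
  | _ A ih =>
  by_cases hA : ∃ x, 2 ≤ A.count x
  · obtain ⟨x, hx⟩ := hA
    have hx1 : x ∈ A := by
      rw [← Multiset.count_pos]
      omega
    have hx2 : x ∈ A.erase x := by
      rw [← Multiset.count_pos, Multiset.count_erase_self]
      omega
    have hAeq : A = x ::ₘ x ::ₘ ((A.erase x).erase x) := by
      rw [Multiset.cons_erase hx2, Multiset.cons_erase hx1]
    have hstep : StepR A ((x+1) ::ₘ (x-3) ::ₘ ((A.erase x).erase x)) :=
      ⟨x, _, hAeq, rfl⟩
    obtain ⟨L, B, hchain, hB⟩ := ih _ hstep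
    exact ⟨L+1, B, ChainN.cons hstep hchain, hB⟩
  · push_neg at hA
    exact ⟨0, A, ChainN.refl A, fun x => by have := hA x; omega⟩

lemma step_mem_ge {A B : Multiset ℤ} (h : StepR A B) {x : ℤ} (hx : x ∈ B) :
    ∃ y ∈ A, y - 3 ≤ x := by
  obtain ⟨p, S, rfl, rfl⟩ := h
  simp only [Multiset.mem_cons] at hx
  rcases hx with rfl | rfl | hx
  · exact ⟨p, by simp, by omega⟩
  · exact ⟨p, by simp, by omega⟩
  · exact ⟨x, by simp [hx], by omega⟩

lemma chain_mem_ge {L : ℕ} {A B : Multiset ℤ} (h : ChainN L A B) {x : ℤ} (hx : x ∈ B) :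
    ∃ y ∈ A, y - 3 * L ≤ x := by
  induction h generalizing x with
  | refl S => exact ⟨x, hx, by omega⟩
  | cons hstep htail ih =>
      obtain ⟨y, hy, hyx⟩ := ih hx
      obtain ⟨z, hz, hzy⟩ := step_mem_ge hstep hy
      exact ⟨z, hz, by omega⟩

lemma step_map {A B : Multiset ℤ} (d : ℤ) (h : StepR A B) :
    StepR (A.map (· + d)) (B.map (· + d)) := by
  obtain ⟨p, S, rfl, rfl⟩ := h
  refine ⟨p + d, S.map (· + d), ?_, ?_⟩
  · simp
  · simp only [Multiset.map_cons]
    congr 1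
    · ring_nf
    · congr 1
      ring_nf

lemma chain_map {L : ℕ} {A B : Multiset ℤ} (d : ℤ) (h : ChainN L A B) :
    ChainN L (A.map (· + d)) (B.map (· + d)) := by
  induction h with
  | refl S => exact ChainN.refl _
  | cons hstep htail ih => exact ChainN.cons (step_map d hstep) ih

/-- conservation of sums of recurrence sequences along a step at a position ≥ 3 -/
lemma step_conserve (g : ℕ → ℤ) (hg : ∀ n : ℕ, g (n+3) = g (n+2) + g (n+1) + g n)
    {A B : Multiset ℤ} (h : StepR A B) (hpos : ∀ x ∈ A, (3:ℤ) ≤ x) :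
    (B.map (fun z => g z.toNat)).sum = (A.map (fun z => g z.toNat)).sum := by
  obtain ⟨p, S, rfl, rfl⟩ := h
  have hp3 : (3:ℤ) ≤ p := hpos p (by simp)
  set nn := (p - 3).toNat with hnn
  have h0 : p - 3 = (nn : ℤ) := by omega
  have h1 : p.toNat = nn + 3 := by omega
  have h2 : (p+1).toNat = nn + 4 := by omega
  have h3 : (p-3).toNat = nn := by omega
  simp only [Multiset.map_cons, Multiset.sum_cons, h1, h2, h3]
  have e4 : g (nn + 4) = g (nn + 3) + g (nn + 2) + g (nn + 1) := hg (nn + 1)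
  have e3 : g (nn + 3) = g (nn + 2) + g (nn + 1) + g nn := hg nn
  omega

lemma chain_conserve (g : ℕ → ℤ) (hg : ∀ n : ℕ, g (n+3) = g (n+2) + g (n+1) + g n) :
    ∀ {L : ℕ} {A B : Multiset ℤ}, ChainN L A B → (∀ x ∈ A, (3 * L : ℤ) + 3 ≤ x) →
    (B.map (fun z => g z.toNat)).sum = (A.map (fun z => g z.toNat)).sum := by
  intro L A B h
  induction h with
  | refl S => intro; rfl
  | @cons L S T U hstep htail ih =>
      intro hpos
      have hposT : ∀ x ∈ T, (3 * L : ℤ) + 3 ≤ x := by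
        intro x hx
        obtain ⟨y, hy, hyx⟩ := step_mem_ge hstep hx
        have := hpos y hy
        push_cast at this ⊢
        omega
      have h1 := ih hposT
      have h2 := step_conserve g hg hstep (fun x hx => by
        have := hpos x hx
        push_cast at this
        omega)
      rw [h1, h2]

end NB


section Bridge

open TB NB

/-- the `ℤ`-valued length sequence satisfies the Tribonacci recurrence -/
lemma glen_rec : ∀ n : ℕ, ((tribPrefix (n+3)).length : ℤ)
    = ((tribPrefix (n+2)).length : ℤ) + ((tribPrefix (n+1)).length : ℤ)
      + ((tribPrefix n).length : ℤ) := by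
  intro n
  rw [trib_rec n]
  push_cast [List.length_append]
  ring

lemma gcnt_rec (a : Fin 3) : ∀ n : ℕ, ((tribPrefix (n+3)).count a : ℤ)
    = ((tribPrefix (n+2)).count a : ℤ) + ((tribPrefix (n+1)).count a : ℤ)
      + ((tribPrefix n).count a : ℤ) := by
  intro n
  rw [trib_rec n]
  push_cast [List.count_append]
  ring

lemma trib_len_ge (n : ℕ) : n + 1 ≤ (tribPrefix n).length := by
  induction n with
  | zero => simp [tribPrefix]
  | succ u ihu => have := trib_len_lt u; omega

/-- The main arithmetic fact: representations of `j * T_m` as sums of distinct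
Tribonacci numbers, with controlled indices. -/
lemma rep_exists (j : ℕ) (hj : 1 ≤ j) : ∃ D : ℕ, ∀ m : ℕ, D ≤ m →
    ∃ lN : List ℕ, lN.Pairwise (· > ·) ∧ (∀ b ∈ lN, m - D + 3 ≤ b) ∧
      ((lN.map (fun b => ((tribPrefix b).length : ℤ))).sum
        = j * ((tribPrefix m).length : ℤ)) ∧
      (∀ a : Fin 3, (lN.map (fun b => ((tribPrefix b).count a : ℤ))).sum
        = j * ((tribPrefix m).count a : ℤ)) := by
  obtain ⟨L, B, hchain, hnodup⟩ := exists_nf (Multiset.replicate j (0:ℤ))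
  refine ⟨3*L + 3, ?_⟩
  intro m hm
  have hchain' : ChainN L (Multiset.replicate j ((0:ℤ) + m)) (B.map (· + (m:ℤ))) := by
    have := chain_map (m:ℤ) hchain
    rwa [Multiset.map_replicate] at this
  set Bm := B.map (· + (m:ℤ)) with hBm
  have hmemB : ∀ x ∈ Bm, (m:ℤ) - 3*L ≤ x := by
    intro x hx
    obtain ⟨y, hy, hyx⟩ := chain_mem_ge hchain' hx
    have := Multiset.eq_of_mem_replicate hy
    omega
  have hmempos : ∀ x ∈ Bm, (3:ℤ) ≤ x := by
    intro x hx
    have := hmemB x hx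
    have : (3*L + 3 : ℤ) ≤ m := by exact_mod_cast hm
    omega
  -- conservation, for an arbitrary recurrence sequence
  have hcons : ∀ g : ℕ → ℤ, (∀ n : ℕ, g (n+3) = g (n+2) + g (n+1) + g n) →
      (Bm.map (fun z => g z.toNat)).sum = j * g m := by
    intro g hg
    have hsrc : ∀ x ∈ Multiset.replicate j ((0:ℤ) + m), (3 * L : ℤ) + 3 ≤ x := by
      intro x hx
      have := Multiset.eq_of_mem_replicate hx
      have h3 : (3*L + 3 : ℤ) ≤ m := by exact_mod_cast hm
      omega
    have := chain_conserve g hg hchain' hsrc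
    rw [this, Multiset.map_replicate, Multiset.sum_replicate]
    have : ((0:ℤ) + m).toNat = m := by omega
    rw [this]
    simp [nsmul_eq_mul]
  -- nodup
  have hndB : B.Nodup := Multiset.nodup_iff_count_le_one.mpr hnodup
  have hndBm : Bm.Nodup := hndB.map (fun a b h => by omega)
  -- sorted list
  set l₀ : List ℤ := Bm.sort (· ≤ ·) with hl₀
  have hperm : (l₀ : Multiset ℤ) = Bm := Multiset.sort_eq _ _
  have hsort : l₀.Pairwise (· ≤ ·) := Multiset.pairwise_sort _ _
  have hndl : l₀.Nodup := by
    rw [← Multiset.coe_nodup, hperm]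
    exact hndBm
  have hmem₀ : ∀ x ∈ l₀, (m:ℤ) - 3*L ≤ x ∧ (3:ℤ) ≤ x := by
    intro x hx
    have hx' : x ∈ Bm := by rw [← hperm]; exact_mod_cast hx
    exact ⟨hmemB x hx', hmempos x hx'⟩
  have hlt : l₀.Pairwise (· < ·) :=
    (hsort.and hndl).imp (fun h => lt_of_le_of_ne h.1 h.2)
  set lr : List ℤ := l₀.reverse with hlr
  have hgt : lr.Pairwise (· > ·) := by
    rw [hlr, List.pairwise_reverse]
    exact hlt
  refine ⟨lr.map Int.toNat, ?_, ?_, ?_, ?_⟩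
  · rw [List.pairwise_map]
    refine hgt.imp_of_mem ?_
    intro a b ha hb hab
    have h1 := hmem₀ b (List.mem_reverse.mp hb)
    have h2 := hmem₀ a (List.mem_reverse.mp ha)
    omega
  · intro b hb
    obtain ⟨x, hx, rfl⟩ := List.mem_map.mp hb
    have := hmem₀ x (List.mem_reverse.mp hx)
    omega
  · have := hcons (fun n => ((tribPrefix n).length : ℤ)) glen_rec
    rw [← this, ← hperm]
    rw [List.map_map]
    rw [Multiset.map_coe, Multiset.sum_coe]
    rw [hlr, List.map_reverse, List.sum_reverse]
    rfl
  · intro a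
    have := hcons (fun n => ((tribPrefix n).count a : ℤ)) (gcnt_rec a)
    rw [← this, ← hperm]
    rw [List.map_map]
    rw [Multiset.map_coe, Multiset.sum_coe]
    rw [hlr, List.map_reverse, List.sum_reverse]
    rfl

end Bridge

section MainAux

variable {t : ℕ → Fin 3}

lemma factor_take (t : ℕ → Fin 3) {n n' : ℕ} (h : n ≤ n') :
    factor t 0 n = (factor t 0 n').take n := by
  unfold factor
  rw [← List.map_take, List.take_range]
  have : min n n' = n := by omega
  rw [this]

lemma factor_add (t : ℕ → Fin 3) (x y : ℕ) :
    factor t 0 (x + y) = factor t 0 x ++ factor t x y := by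
  unfold factor
  rw [List.range_add, List.map_append, List.map_map]
  congr 1
  apply List.map_congr_left
  intro b _
  simp only [Function.comp_apply]
  congr 1
  omega

lemma factor_of_prefix (ht : ∀ m : ℕ, factor t 0 (tribPrefix m).length = tribPrefix m)
    {w : List (Fin 3)} {M : ℕ} (h : w <+: tribPrefix M) :
    factor t 0 w.length = w := by
  rw [factor_take t h.length_le, ht M]
  exact (List.prefix_iff_eq_take.mp h).symm

lemma cast_list_sum (l : List ℕ) (f : ℕ → ℕ) :
    ((l.map f).sum : ℤ) = (l.map (fun b => (f b : ℤ))).sum := by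
  induction l with
  | nil => simp
  | cons a u ih => simp [ih]

end MainAux

/-- For every `k ≥ 1`, each suffix of the Tribonacci word begins in infinitely
many abelian `k`-powers: arbitrarily long abelian `k`-powers occur as prefixes
of every suffix. -/
theorem tribonacci_suffixes_begin_in_abelian_powers (t : ℕ → Fin 3)
    (ht : ∀ m : ℕ, factor t 0 (tribPrefix m).length = tribPrefix m)
    (k : ℕ) (hk : 1 ≤ k) (i : ℕ) :
    ∀ N : ℕ, ∃ ℓ : ℕ, AbelianPowerAt t i k ℓ ∧ N < k * ℓ := by
  intro N
  classical
  -- per-j bound from rep_exists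
  set Df : ℕ → ℕ := fun j => if h : 1 ≤ j then (rep_exists j h).choose else 0 with hDf
  have hDspec : ∀ j, 1 ≤ j → ∀ m : ℕ, Df j ≤ m →
      ∃ lN : List ℕ, lN.Pairwise (· > ·) ∧ (∀ b ∈ lN, m - Df j + 3 ≤ b) ∧
        ((lN.map (fun b => ((tribPrefix b).length : ℤ))).sum
          = j * ((tribPrefix m).length : ℤ)) ∧
        (∀ a : Fin 3, (lN.map (fun b => ((tribPrefix b).count a : ℤ))).sum
          = j * ((tribPrefix m).count a : ℤ)) := by
    intro j hj
    have := (rep_exists j hj).choose_spec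
    simpa [hDf, hj] using this
  set Dmax : ℕ := (Finset.range (k+1)).sup Df with hDmax
  have hDle : ∀ j ≤ k, Df j ≤ Dmax := by
    intro j hjk
    exact Finset.le_sup (by simp [Finset.mem_range]; omega)
  set m : ℕ := N + Dmax + i + 1 with hm
  set ℓ : ℕ := (tribPrefix m).length with hℓ
  have hℓpos : m + 1 ≤ ℓ := trib_len_ge m
  -- the key counting identity
  have key : ∀ j, j ≤ k → ∀ a : Fin 3,
      (factor t 0 (i + j * ℓ)).count a
        = j * (tribPrefix m).count a + (factor t 0 i).count a := by
    intro j hjk a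
    rcases Nat.eq_zero_or_pos j with rfl | hj
    · simp
    · obtain ⟨lN, hpw, hmem, hlen, hcnt⟩ := hDspec j hj m (by
        have := hDle j hjk
        omega)
      have hmem' : ∀ b ∈ lN, i + 3 ≤ b := by
        intro b hb
        have h1 := hmem b hb
        have h2 := hDle j hjk
        omega
      -- the combined list
      have hpw2 : (lN ++ [i]).Pairwise (· > ·) := by
        rw [List.pairwise_append]
        exact ⟨hpw, List.pairwise_singleton _ _, by
          intro x hx y hy
          simp at hy
          subst hy
          have := hmem' x hx
          omega⟩
      obtain ⟨M, hwM⟩ := TB.pref (lN ++ [i]) hpw2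
      rw [TB.Phi_append] at hwM
      have hPhii : TB.Phi [i] = tribPrefix i := by simp [TB.Phi]
      rw [hPhii] at hwM
      -- length of Phi lN
      have hPhiLenNat : (TB.Phi lN).length = j * ℓ := by
        have h1 : (TB.Phi lN).length = (lN.map (fun b => (tribPrefix b).length)).sum := by
          rw [TB.Phi, List.length_flatten, List.map_map]
          rfl
        have h2 : (((lN.map (fun b => (tribPrefix b).length)).sum : ℕ) : ℤ)
            = ((j * ℓ : ℕ) : ℤ) := by
          rw [cast_list_sum, hlen, hℓ]
          push_cast
          ring
        have h3 := Nat.cast_inj.mp h2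
        omega
      -- counts of Phi lN
      have hPhiCnt : (TB.Phi lN).count a = j * (tribPrefix m).count a := by
        have h1 : (TB.Phi lN).count a = (lN.map (fun b => (tribPrefix b).count a)).sum := by
          rw [TB.Phi, List.count_flatten, List.map_map]
          rfl
        have h2 : (((lN.map (fun b => (tribPrefix b).count a)).sum : ℕ) : ℤ)
            = ((j * (tribPrefix m).count a : ℕ) : ℤ) := by
          rw [cast_list_sum, hcnt a]
          push_cast
          ring
        have h3 := Nat.cast_inj.mp h2
        omega
      -- slice the factor
      have hwfact : factor t 0 (TB.Phi lN ++ tribPrefix i).length = TB.Phi lN ++ tribPrefix i :=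
        factor_of_prefix ht hwM
      have hilen : i ≤ (tribPrefix i).length := by
        have := trib_len_ge i
        omega
      have hsplit : factor t 0 (i + j * ℓ) = TB.Phi lN ++ (tribPrefix i).take i := by
        have h1 : i + j * ℓ ≤ (TB.Phi lN ++ tribPrefix i).length := by
          rw [List.length_append, hPhiLenNat]
          omega
        rw [factor_take t h1, hwfact]
        have h2 : i + j * ℓ = (TB.Phi lN).length + i := by rw [hPhiLenNat]; ring
        rw [h2, List.take_append]; simp
      have htakei : (tribPrefix i).take i = factor t 0 i := by
        rw [factor_take t hilen, ht i]
      rw [hsplit, htakei, List.count_append, hPhiCnt]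
  -- blocks all have the counts of tribPrefix m
  have blocks : ∀ j, j < k → ∀ a : Fin 3,
      (factor t (i + j * ℓ) ℓ).count a = (tribPrefix m).count a := by
    intro j hjk a
    have e1 := key j (by omega) a
    have e2 := key (j+1) (by omega) a
    have hsplit : factor t 0 (i + (j+1) * ℓ)
        = factor t 0 (i + j * ℓ) ++ factor t (i + j * ℓ) ℓ := by
      have : i + (j+1) * ℓ = (i + j * ℓ) + ℓ := by ring
      rw [this, factor_add]
    rw [hsplit, List.count_append] at e2
    have : (j+1) * (tribPrefix m).count a = j * (tribPrefix m).count a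
        + (tribPrefix m).count a := by ring
    omega
  refine ⟨ℓ, ⟨by omega, ?_⟩, ?_⟩
  · intro j₁ j₂ hj₁ hj₂ a
    rw [blocks j₁ hj₁ a, blocks j₂ hj₂ a]
  · have h1 : N < ℓ := by omega
    calc N < ℓ := h1
      _ ≤ k * ℓ := Nat.le_mul_of_pos_left ℓ (by omega)
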